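/- Let N ∈ ℝ^{r×r} be symmetric positive definite, let H ∈ ℝ^{r×r} be symmetric, let q be in the probability simplex of ℝ^r with q_a > 0 for all a, let y ∈ {−1,+1}^r, and let λ > 0. Let η ↦ N_η be a map from [0, η₀) into symmetric r×r matrices with N_0 = N and N_η = N + η·H + o(η) as η → 0⁺; for η small enough that N_η is positive definite, let g_η be the unique minimizer over ℝ^r of Φ_η(g) = ∑_{a=1}^r q_a·ℓ(y_a·g_a) + (λ/2)·gᵀ N_η^{−1} g. Then η ↦ g_η is right-differentiable at η = 0, with derivative (d/dη) g_η |_{η=0} = λ·J₀^{−1}·N^{−1}·H·N^{−1}·g₀, where g₀ = g_{η=0} and J₀ = diag( q_a·ℓ''(y_a·(g₀)_a) )_{a=1}^r + λ·N^{−1}. -/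

import Mathlib

open Matrix Set Filter Asymptotics
open Topology

/-- Logistic loss `ℓ(u) = log(1 + e^{−u})`. -/
noncomputable def logLoss (u : ℝ) : ℝ := Real.log (1 + Real.exp (-u))

/-- Second derivative of the logistic loss: `ℓ''(u) = e^u/(1 + e^u)²`. -/
noncomputable def logLoss'' (u : ℝ) : ℝ := Real.exp u / (1 + Real.exp u) ^ 2

/-- First derivative of the logistic loss. -/
noncomputable def logLoss' (u : ℝ) : ℝ := -(1 + Real.exp u)⁻¹

/-- Third derivative of the logistic loss. -/
noncomputable def logLoss''' (u : ℝ) : ℝ :=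
  Real.exp u * (1 - Real.exp u) / (1 + Real.exp u) ^ 3

lemma one_add_exp_pos (u : ℝ) : 0 < 1 + Real.exp u := by positivity

lemma hasDerivAt_logLoss (u : ℝ) : HasDerivAt logLoss (logLoss' u) u := by
  have h1 : 0 < 1 + Real.exp (-u) := one_add_exp_pos _
  have hf : HasDerivAt (fun u : ℝ => 1 + Real.exp (-u)) (-Real.exp (-u)) u := by
    simpa using ((Real.hasDerivAt_exp (-u)).comp u (hasDerivAt_neg u)).const_add 1
  have := hf.log h1.ne'
  refine this.congr_deriv ?_
  have he : Real.exp (-u) = (Real.exp u)⁻¹ := Real.exp_neg u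
  rw [logLoss', he]
  have h2 : Real.exp u ≠ 0 := (Real.exp_pos u).ne'
  field_simp
  ring

lemma hasDerivAt_logLoss' (u : ℝ) : HasDerivAt logLoss' (logLoss'' u) u := by
  have h1 : (1 + Real.exp u) ≠ 0 := (one_add_exp_pos u).ne'
  have hf : HasDerivAt (fun u : ℝ => 1 + Real.exp u) (Real.exp u) u := by
    simpa using (Real.hasDerivAt_exp u).const_add 1
  have := (hf.inv h1).neg
  refine this.congr_deriv ?_
  rw [logLoss'']
  field_simp

lemma hasDerivAt_logLoss'' (u : ℝ) : HasDerivAt logLoss'' (logLoss''' u) u := by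
  have h1 : (1 + Real.exp u) ≠ 0 := (one_add_exp_pos u).ne'
  have hg : HasDerivAt (fun u : ℝ => (1 + Real.exp u) ^ 2)
      (2 * (1 + Real.exp u) * Real.exp u) u := by
    have hf : HasDerivAt (fun u : ℝ => 1 + Real.exp u) (Real.exp u) u := by
      simpa using (Real.hasDerivAt_exp u).const_add 1
    simpa [mul_comm] using hf.fun_pow 2
  have h2 : ((1 + Real.exp u) ^ 2) ≠ 0 := pow_ne_zero _ h1
  have := (Real.hasDerivAt_exp u).div hg h2
  refine this.congr_deriv ?_
  rw [logLoss''']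
  field_simp
  ring

lemma logLoss''_pos (u : ℝ) : 0 < logLoss'' u := by
  rw [logLoss'']; positivity

lemma abs_logLoss''' (u : ℝ) : |logLoss''' u| ≤ 1 := by
  rw [logLoss''']
  have h := Real.exp_pos u
  rw [abs_div, abs_of_pos (by positivity : (0:ℝ) < (1 + Real.exp u) ^ 3)]
  rw [div_le_one (by positivity)]
  rw [abs_mul, abs_of_pos h]
  rcases abs_cases (1 - Real.exp u) with ⟨h2, _⟩ | ⟨h2, _⟩ <;> rw [h2] <;>
    nlinarith [mul_pos h h, mul_pos (mul_pos h h) h, sq_nonneg (Real.exp u)]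

lemma logLoss'_mono : Monotone logLoss' := by
  intro u v huv
  have := Real.exp_le_exp.2 huv
  have h1 := one_add_exp_pos u
  rw [logLoss', logLoss', neg_le_neg_iff]
  exact inv_anti₀ h1 (by linarith)

lemma logLoss'_mono_mul (u v : ℝ) : 0 ≤ (logLoss' u - logLoss' v) * (u - v) := by
  rcases le_total u v with h | h
  · have := logLoss'_mono h; nlinarith
  · have := logLoss'_mono h; nlinarith

lemma logLoss''_lipschitz (u v : ℝ) : |logLoss'' u - logLoss'' v| ≤ |u - v| := by
  have := Convex.norm_image_sub_le_of_norm_hasDerivWithin_le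
    (f := logLoss'') (f' := logLoss''') (C := 1) (s := (univ : Set ℝ))
    (fun x _ => (hasDerivAt_logLoss'' x).hasDerivWithinAt)
    (fun x _ => by simpa using abs_logLoss''' x) convex_univ (mem_univ v) (mem_univ u)
  simpa [Real.norm_eq_abs, one_mul] using this

lemma logLoss'_taylor (u v : ℝ) :
    |logLoss' u - logLoss' v - logLoss'' v * (u - v)| ≤ (u - v) ^ 2 := by
  have key := Convex.norm_image_sub_le_of_norm_hasDerivWithin_le
    (f := fun t => logLoss' t - logLoss'' v * t)
    (f' := fun t => logLoss'' t - logLoss'' v) (C := |u - v|) (s := segment ℝ v u)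
    (fun x _ => by
      simpa using ((hasDerivAt_logLoss' x).fun_sub
        ((hasDerivAt_id x).const_mul (logLoss'' v))).hasDerivWithinAt)
    (fun x hx => by
      rw [Real.norm_eq_abs]
      calc |logLoss'' x - logLoss'' v| ≤ |x - v| := logLoss''_lipschitz x v
        _ ≤ |u - v| := by
          rw [segment_eq_uIcc] at hx
          exact abs_sub_left_of_mem_uIcc hx)
    (convex_segment v u) (left_mem_segment ℝ v u) (right_mem_segment ℝ v u)
  rw [Real.norm_eq_abs, Real.norm_eq_abs] at key
  calc |logLoss' u - logLoss' v - logLoss'' v * (u - v)|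
      = |(logLoss' u - logLoss'' v * u) - (logLoss' v - logLoss'' v * v)| := by ring_nf
    _ ≤ |u - v| * |u - v| := key
    _ = (u - v) ^ 2 := by rw [← abs_mul, ← sq, abs_sq]

lemma dotProduct_self_nonneg' {r : ℕ} (x : Fin r → ℝ) : 0 ≤ x ⬝ᵥ x :=
  Finset.sum_nonneg fun i _ => mul_self_nonneg _

lemma dotProduct_self_pos' {r : ℕ} {x : Fin r → ℝ} (hx : x ≠ 0) : 0 < x ⬝ᵥ x := by
  rcases Function.ne_iff.1 hx with ⟨i, hi⟩
  have h0 : x i ≠ 0 := by simpa using hi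
  calc (0:ℝ) < x i * x i := mul_self_pos.2 h0
    _ ≤ x ⬝ᵥ x := Finset.single_le_sum (f := fun j => x j * x j)
        (fun j _ => mul_self_nonneg _) (Finset.mem_univ i)

lemma continuous_quadform {r : ℕ} (M : Matrix (Fin r) (Fin r) ℝ) :
    Continuous fun x : Fin r → ℝ => x ⬝ᵥ (M *ᵥ x) := by
  simp only [Matrix.mulVec, dotProduct]
  fun_prop

lemma posDef_dotProduct' {r : ℕ} {M : Matrix (Fin r) (Fin r) ℝ} (hM : M.PosDef)
    {x : Fin r → ℝ} (hx : x ≠ 0) : 0 < x ⬝ᵥ (M *ᵥ x) := by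
  simpa using hM.dotProduct_mulVec_pos hx

lemma posdef_coercive {r : ℕ} (hr : 0 < r) (M : Matrix (Fin r) (Fin r) ℝ)
    (hM : M.PosDef) :
    ∃ μ > 0, ∀ x : Fin r → ℝ, μ * (x ⬝ᵥ x) ≤ x ⬝ᵥ (M *ᵥ x) := by
  set S : Set (Fin r → ℝ) := {x | x ⬝ᵥ x = 1} with hS
  have hSne : S.Nonempty := by
    refine ⟨Pi.single ⟨0, hr⟩ 1, ?_⟩
    simp [hS, single_dotProduct]
  have hcont : Continuous fun x : Fin r → ℝ => x ⬝ᵥ x := by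
    simp only [dotProduct]; fun_prop
  have hSc : IsCompact S := by
    apply Metric.isCompact_of_isClosed_isBounded
    · exact isClosed_eq hcont continuous_const
    · refine Metric.isBounded_closedBall (x := (0 : Fin r → ℝ)) (r := 1) |>.subset ?_
      intro x hx
      rw [Metric.mem_closedBall, dist_zero_right]
      refine pi_norm_le_iff_of_nonneg zero_le_one |>.2 fun i => ?_
      rw [Real.norm_eq_abs, ← sq_le_one_iff_abs_le_one, sq]
      calc x i * x i ≤ x ⬝ᵥ x := Finset.single_le_sum (f := fun j => x j * x j)
            (fun j _ => mul_self_nonneg _) (Finset.mem_univ i)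
        _ = 1 := hx
  obtain ⟨x₀, hx₀S, hmin⟩ := hSc.exists_isMinOn hSne (continuous_quadform M).continuousOn
  have hx₀ : x₀ ≠ 0 := by
    intro h
    rw [hS] at hx₀S
    simp [h] at hx₀S
  refine ⟨x₀ ⬝ᵥ (M *ᵥ x₀), posDef_dotProduct' hM hx₀, fun x => ?_⟩
  by_cases hx : x = 0
  · simp [hx]
  · set c : ℝ := Real.sqrt (x ⬝ᵥ x) with hc
    have hxx : 0 < x ⬝ᵥ x := dotProduct_self_pos' hx
    have hcpos : 0 < c := Real.sqrt_pos.2 hxx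
    have hc2 : c ^ 2 = x ⬝ᵥ x := Real.sq_sqrt hxx.le
    have hyS : (c⁻¹ • x) ∈ S := by
      rw [hS]
      simp only [mem_setOf_eq, smul_dotProduct, dotProduct_smul, smul_eq_mul]
      field_simp [hcpos.ne']
      nlinarith [hc2]
    have hle := isMinOn_iff.1 hmin _ hyS
    simp only [smul_dotProduct, dotProduct_smul, Matrix.mulVec_smul,
      smul_eq_mul] at hle
    have := mul_le_mul_of_nonneg_left hle (by positivity : (0:ℝ) ≤ c^2)
    calc (x₀ ⬝ᵥ (M *ᵥ x₀)) * (x ⬝ᵥ x) = c^2 * (x₀ ⬝ᵥ (M *ᵥ x₀)) := by rw [hc2]; ring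
      _ ≤ c^2 * (c⁻¹ * (c⁻¹ * (x ⬝ᵥ (M *ᵥ x)))) := this
      _ = x ⬝ᵥ (M *ᵥ x) := by field_simp [hcpos.ne']

lemma stationarity {r : ℕ} (q y : Fin r → ℝ) (lam : ℝ)
    (A : Matrix (Fin r) (Fin r) ℝ) (hA : A.IsSymm) (g : Fin r → ℝ)
    (hmin : IsMinOn (fun g' : Fin r → ℝ =>
        ∑ a, q a * logLoss (y a * g' a) + (lam / 2) * (g' ⬝ᵥ (A *ᵥ g'))) univ g)
    (a : Fin r) :
    q a * (logLoss' (y a * g a) * y a) + lam * (A *ᵥ g) a = 0 := by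
  classical
  set e : Fin r → ℝ := Pi.single a 1 with he
  set Φ : (Fin r → ℝ) → ℝ := fun g' =>
    ∑ b, q b * logLoss (y b * g' b) + (lam / 2) * (g' ⬝ᵥ (A *ᵥ g')) with hΦ
  set ψ : ℝ → ℝ := fun t => Φ (g + t • e) with hψ
  have hloc : IsLocalMin ψ 0 := by
    apply Filter.Eventually.of_forall
    intro t
    have := isMinOn_iff.1 hmin (g + t • e) (mem_univ _)
    simpa [hψ] using this
  have hsum : HasDerivAt (fun t : ℝ => ∑ b, q b * logLoss (y b * (g b + t * e b)))
      (q a * (logLoss' (y a * g a) * y a)) 0 := by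
    have h1 : ∀ b : Fin r, HasDerivAt
        (fun t : ℝ => q b * logLoss (y b * (g b + t * e b)))
        (q b * (logLoss' (y b * (g b + 0 * e b)) * (y b * e b))) 0 := by
      intro b
      have hinner : HasDerivAt (fun t : ℝ => y b * (g b + t * e b)) (y b * e b) 0 := by
        simpa using (((hasDerivAt_id (0:ℝ)).mul_const (e b)).const_add (g b)).const_mul (y b)
      exact ((hasDerivAt_logLoss _).comp 0 hinner).const_mul (q b)
    have := HasDerivAt.fun_sum (fun b (_ : b ∈ Finset.univ) => h1 b)
    refine this.congr_deriv ?_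
    rw [Finset.sum_eq_single a]
    · simp [he]
    · intro b _ hb
      simp [he, Pi.single_apply, hb]
    · simp
  set c1 : ℝ := (lam / 2) * ((e ⬝ᵥ (A *ᵥ g)) + (g ⬝ᵥ (A *ᵥ e))) with hc1
  have hquad : HasDerivAt (fun t : ℝ => (lam / 2) * ((g + t • e) ⬝ᵥ (A *ᵥ (g + t • e)))) c1 0 := by
    have hfe : (fun t : ℝ => (lam / 2) * ((g + t • e) ⬝ᵥ (A *ᵥ (g + t • e)))) =
        fun t : ℝ => (lam / 2) * (g ⬝ᵥ (A *ᵥ g)) + t * c1 +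
          t ^ 2 * ((lam / 2) * (e ⬝ᵥ (A *ᵥ e))) := by
      funext t
      simp only [Matrix.mulVec_add, Matrix.mulVec_smul, add_dotProduct,
        dotProduct_add, smul_dotProduct, dotProduct_smul,
        smul_eq_mul, hc1]
      ring
    rw [hfe]
    have h1 : HasDerivAt (fun t : ℝ => (lam / 2) * (g ⬝ᵥ (A *ᵥ g)) + t * c1) c1 0 := by
      simpa using ((hasDerivAt_id (0:ℝ)).mul_const c1).const_add ((lam / 2) * (g ⬝ᵥ (A *ᵥ g)))
    have h2 : HasDerivAt (fun t : ℝ => t ^ 2 * ((lam / 2) * (e ⬝ᵥ (A *ᵥ e)))) 0 0 := by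
      simpa using (hasDerivAt_pow 2 (0:ℝ)).mul_const ((lam / 2) * (e ⬝ᵥ (A *ᵥ e)))
    simpa using h1.fun_add h2
  have hψd : HasDerivAt ψ (q a * (logLoss' (y a * g a) * y a) + c1) 0 := by
    have : ψ = fun t => (∑ b, q b * logLoss (y b * (g b + t * e b))) +
        (lam / 2) * ((g + t • e) ⬝ᵥ (A *ᵥ (g + t • e))) := by
      funext t
      simp [hψ, hΦ, Pi.add_apply, Pi.smul_apply, smul_eq_mul]
    rw [this]
    exact hsum.add hquad
  have hd0 : q a * (logLoss' (y a * g a) * y a) + c1 = 0 := by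
    rw [← hψd.deriv]
    exact hloc.deriv_eq_zero
  have he1 : e ⬝ᵥ (A *ᵥ g) = (A *ᵥ g) a := by
    simp [he, single_dotProduct]
  have he2 : g ⬝ᵥ (A *ᵥ e) = (A *ᵥ g) a := by
    rw [Matrix.dotProduct_mulVec, ← Matrix.mulVec_transpose, hA.eq]
    rw [dotProduct_comm]
    exact he1
  rw [hc1, he1, he2] at hd0
  calc q a * (logLoss' (y a * g a) * y a) + lam * (A *ᵥ g) a
      = q a * (logLoss' (y a * g a) * y a) + lam / 2 * ((A *ᵥ g) a + (A *ᵥ g) a) := by ring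
    _ = 0 := hd0

lemma quad_perturb {r : ℕ} (P Q : Matrix (Fin r) (Fin r) ℝ) (δ : ℝ) (hδ : 0 ≤ δ)
    (h : ∀ a b, |P a b - Q a b| ≤ δ) (x : Fin r → ℝ) :
    |x ⬝ᵥ (P *ᵥ x) - x ⬝ᵥ (Q *ᵥ x)| ≤ δ * r * (x ⬝ᵥ x) := by
  have h1 : x ⬝ᵥ (P *ᵥ x) - x ⬝ᵥ (Q *ᵥ x) = ∑ a, ∑ b, x a * ((P a b - Q a b) * x b) := by
    simp only [dotProduct, Matrix.mulVec, ← Finset.sum_sub_distrib]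
    refine Finset.sum_congr rfl fun a _ => ?_
    rw [Finset.mul_sum, Finset.mul_sum, ← Finset.sum_sub_distrib]
    refine Finset.sum_congr rfl fun b _ => by ring
  rw [h1]
  calc |∑ a, ∑ b, x a * ((P a b - Q a b) * x b)|
      ≤ ∑ a, |∑ b, x a * ((P a b - Q a b) * x b)| := Finset.abs_sum_le_sum_abs _ _
    _ ≤ ∑ a, ∑ b, |x a| * (δ * |x b|) := by
        refine Finset.sum_le_sum fun a _ => ?_
        calc |∑ b, x a * ((P a b - Q a b) * x b)|
            ≤ ∑ b, |x a * ((P a b - Q a b) * x b)| := Finset.abs_sum_le_sum_abs _ _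
          _ ≤ ∑ b, |x a| * (δ * |x b|) := by
              refine Finset.sum_le_sum fun b _ => ?_
              rw [abs_mul, abs_mul]
              exact mul_le_mul_of_nonneg_left
                (mul_le_mul_of_nonneg_right (h a b) (abs_nonneg _)) (abs_nonneg _)
    _ = δ * ((∑ a, |x a|) * (∑ a, |x a|)) := by
        rw [Finset.sum_mul_sum, Finset.mul_sum]
        refine Finset.sum_congr rfl fun a _ => ?_
        rw [Finset.mul_sum]
        exact Finset.sum_congr rfl fun b _ => by ring
    _ = δ * (∑ a, |x a|) ^ 2 := by rw [sq]
    _ ≤ δ * ((Finset.univ : Finset (Fin r)).card * ∑ a, |x a| ^ 2) :=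
        mul_le_mul_of_nonneg_left sq_sum_le_card_mul_sum_sq hδ
    _ = δ * r * (x ⬝ᵥ x) := by
        have h2 : ∑ a, |x a| ^ 2 = x ⬝ᵥ x := by
          simp [dotProduct, sq_abs, sq]
        rw [Finset.card_univ, Fintype.card_fin, h2, mul_assoc]

/-- First-order value of abstract prompting: if `N_η = N + η·H + o(η)` as `η → 0⁺`,
then the ideal template minimizer `g_η` of
`Φ_η(g) = ∑ₐ q_a·ℓ(y_a·g_a) + (λ/2)·gᵀ N_η⁻¹ g` is right-differentiable at `η = 0`,
with derivative `λ·J₀⁻¹·N⁻¹·H·N⁻¹·g₀`, where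
`J₀ = diag(q_a·ℓ''(y_a·(g₀)_a)) + λ·N⁻¹`. -/
theorem prompted_minimizer_right_derivative
    {r : ℕ} (hr : 0 < r)
    (N : Matrix (Fin r) (Fin r) ℝ) (hN : N.PosDef)
    (H : Matrix (Fin r) (Fin r) ℝ) (hH : H.IsSymm)
    (q : Fin r → ℝ) (hq0 : ∀ a, 0 < q a) (hq1 : (∑ a, q a) = 1)
    (y : Fin r → ℝ) (hy : ∀ a, y a = 1 ∨ y a = -1)
    (lam : ℝ) (hlam : 0 < lam)
    (η₀ : ℝ) (hη₀ : 0 < η₀)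
    (Nmap : ℝ → Matrix (Fin r) (Fin r) ℝ)
    (hNmap0 : Nmap 0 = N)
    (hNmapSymm : ∀ η ∈ Ico (0:ℝ) η₀, (Nmap η).IsSymm)
    (hNmapExp : ∀ a b : Fin r,
      (fun η => Nmap η a b - (N a b + η * H a b)) =o[nhdsWithin 0 (Ioi 0)]
        (fun η => η))
    (g : ℝ → Fin r → ℝ)
    (hg : ∀ᶠ η in nhdsWithin 0 (Ici 0), (Nmap η).PosDef ∧
      IsMinOn (fun g' : Fin r → ℝ =>
        ∑ a, q a * logLoss (y a * g' a) +
          (lam / 2) * (g' ⬝ᵥ ((Nmap η)⁻¹ *ᵥ g'))) univ (g η))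
    (J₀ : Matrix (Fin r) (Fin r) ℝ)
    (hJ₀ : J₀ = Matrix.diagonal (fun a => q a * logLoss'' (y a * g 0 a)) +
      lam • N⁻¹) :
    HasDerivWithinAt g
      (lam • (J₀⁻¹ *ᵥ (N⁻¹ *ᵥ (H *ᵥ (N⁻¹ *ᵥ g 0))))) (Ici 0) 0 := by
  classical
  set l : Filter ℝ := nhdsWithin 0 (Ioi 0) with hl
  have hl_le : l ≤ nhdsWithin (0:ℝ) (Ici 0) := nhdsWithin_mono 0 Ioi_subset_Ici_self
  -- inverse symmetry helper
  have hsymm_inv : ∀ {M : Matrix (Fin r) (Fin r) ℝ}, M.PosDef → (M⁻¹).IsSymm := by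
    intro M hM
    have h1 : (M⁻¹)ᴴ = M⁻¹ := hM.inv.1
    rwa [Matrix.conjTranspose_eq_transpose_of_trivial] at h1
  -- stationarity at 0
  have hg0 := hg.self_of_nhdsWithin (self_mem_Ici (a := (0:ℝ)))
  rw [hNmap0] at hg0
  have st0 : ∀ a, q a * (logLoss' (y a * g 0 a) * y a) + lam * (N⁻¹ *ᵥ g 0) a = 0 :=
    stationarity q y lam N⁻¹ (hsymm_inv hN) (g 0) hg0.2
  -- eventual data on l
  have hgl : ∀ᶠ η in l, (Nmap η).PosDef ∧
      IsMinOn (fun g' : Fin r → ℝ =>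
        ∑ a, q a * logLoss (y a * g' a) +
          (lam / 2) * (g' ⬝ᵥ ((Nmap η)⁻¹ *ᵥ g'))) univ (g η) := hg.filter_mono hl_le
  have stE : ∀ᶠ η in l, ∀ a, q a * (logLoss' (y a * g η a) * y a) +
      lam * ((Nmap η)⁻¹ *ᵥ g η) a = 0 :=
    hgl.mono fun η hη => stationarity q y lam _ (hsymm_inv hη.1) (g η) hη.2
  -- basic asymptotics
  have hηo : Tendsto (fun η : ℝ => η) l (𝓝 0) := tendsto_id.mono_left nhdsWithin_le_nhds
  have hηsq : (fun η : ℝ => η * η) =o[l] (fun η => η) := by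
    have h1 : (fun η : ℝ => η) =o[l] (fun _ => (1:ℝ)) := (isLittleO_one_iff ℝ).2 hηo
    simpa using (isBigO_refl (fun η : ℝ => η) l).mul_isLittleO h1
  have hNo : ∀ a b, (fun η => Nmap η a b - N a b - η * H a b) =o[l] (fun η => η) := by
    intro a b
    refine (hNmapExp a b).congr' (Filter.Eventually.of_forall fun η => by ring) EventuallyEq.rfl
  have hNab : ∀ a b, (fun η => Nmap η a b - N a b) =O[l] (fun η => η) := by
    intro a b
    have h2 : (fun η : ℝ => η * H a b) =O[l] (fun η => η) := by
      simpa [mul_comm] using (isBigO_refl (fun η : ℝ => η) l).const_mul_left (H a b)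
    have := (hNo a b).isBigO.add h2
    refine this.congr_left fun η => by ring
  -- convergence of Nmap and its inverse
  have hNtends : Tendsto Nmap l (𝓝 N) := by
    refine tendsto_pi_nhds.2 fun a => ?_
    refine tendsto_pi_nhds.2 fun b => ?_
    have h1 : Tendsto (fun η => Nmap η a b - N a b) l (𝓝 0) :=
      (hNab a b).trans_tendsto hηo
    have := h1.add_const (N a b)
    simpa using this
  have hdetN : IsUnit N.det := hN.det_pos.ne'.isUnit
  have hEtends : Tendsto (fun η => (Nmap η)⁻¹) l (𝓝 N⁻¹) := by
    have hc : ContinuousAt Inv.inv N := by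
      apply continuousAt_matrix_inv
      rw [Ring.inverse_eq_inv']
      exact continuousAt_inv₀ hN.det_pos.ne'
    exact hc.tendsto.comp hNtends
  have hEab : ∀ a b, Tendsto (fun η => (Nmap η)⁻¹ a b) l (𝓝 (N⁻¹ a b)) := by
    intro a b
    have h1 := tendsto_pi_nhds.1 hEtends a
    exact tendsto_pi_nhds.1 h1 b
  have hEO1 : ∀ a b, (fun η => (Nmap η)⁻¹ a b) =O[l] (fun _ => (1:ℝ)) :=
    fun a b => (hEab a b).isBigO_one ℝ
  -- matrix identity for the inverse difference
  have hEid : ∀ᶠ η in l, (Nmap η)⁻¹ - N⁻¹ = -(N⁻¹ * (Nmap η - N) * (Nmap η)⁻¹) := by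
    refine hgl.mono fun η hη => ?_
    have h2 : Nmap η * (Nmap η)⁻¹ = 1 := Matrix.mul_nonsing_inv _ (hη.1.det_pos.ne'.isUnit)
    have h3 : N⁻¹ * N = 1 := Matrix.nonsing_inv_mul N hdetN
    calc (Nmap η)⁻¹ - N⁻¹ = -(N⁻¹ * Nmap η * (Nmap η)⁻¹ - N⁻¹ * N * (Nmap η)⁻¹) := by
          rw [mul_assoc, h2, h3, mul_one, one_mul]
          abel
      _ = -(N⁻¹ * (Nmap η - N) * (Nmap η)⁻¹) := by rw [Matrix.mul_sub, Matrix.sub_mul]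
  have hEsub : ∀ a b, (fun η => (Nmap η)⁻¹ a b - N⁻¹ a b) =O[l] (fun η => η) := by
    intro a b
    have hbig : (fun η => ∑ d, (∑ c, N⁻¹ a c * (Nmap η c d - N c d)) * (Nmap η)⁻¹ d b)
        =O[l] (fun η => η) := by
      refine IsBigO.fun_sum fun d _ => ?_
      have hin : (fun η => ∑ c, N⁻¹ a c * (Nmap η c d - N c d)) =O[l] (fun η => η) :=
        IsBigO.fun_sum fun c _ => (hNab c d).const_mul_left _
      simpa using hin.mul (hEO1 d b)
    refine hbig.neg_left.congr' ?_ EventuallyEq.rfl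
    refine hEid.mono fun η hη => ?_
    have := congrFun (congrFun hη a) b
    simp only [Matrix.sub_apply, Matrix.neg_apply, Matrix.mul_apply] at this
    exact this.symm
  -- coercivity
  obtain ⟨μ, hμ, hcoer⟩ := posdef_coercive hr N⁻¹ hN.inv
  have hrpos : (0:ℝ) < r := by exact_mod_cast hr
  have hδpos : 0 < μ / (2 * r) := by positivity
  have hclose : ∀ᶠ η in l, ∀ a : Fin r, ∀ b : Fin r,
      |(Nmap η)⁻¹ a b - N⁻¹ a b| ≤ μ / (2 * r) := by
    rw [eventually_all]
    intro a
    rw [eventually_all]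
    intro b
    have := Metric.tendsto_nhds.mp (hEab a b) _ hδpos
    exact this.mono fun η hη => by rw [Real.dist_eq] at hη; exact hη.le
  have hcoE : ∀ᶠ η in l, ∀ x : Fin r → ℝ,
      (μ/2) * (x ⬝ᵥ x) ≤ x ⬝ᵥ ((Nmap η)⁻¹ *ᵥ x) := by
    refine hclose.mono fun η hη x => ?_
    have h1 := quad_perturb ((Nmap η)⁻¹) N⁻¹ _ hδpos.le (fun a b => hη a b) x
    have h2 := hcoer x
    have h3 := (abs_le.1 h1).1
    have h4 : μ / (2*(r:ℝ)) * r * (x ⬝ᵥ x) = μ/2 * (x ⬝ᵥ x) := by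
      field_simp
    rw [h4] at h3
    linarith
  -- stability: Δ = O(η)
  set Δ : ℝ → Fin r → ℝ := fun η b => g η b - g 0 b with hΔdef
  set w : ℝ → Fin r → ℝ := fun η => ((Nmap η)⁻¹ - N⁻¹) *ᵥ g 0 with hwdef
  have hwO : ∀ a, (fun η => w η a) =O[l] fun η => η := by
    intro a
    have hrew : (fun η => w η a) = fun η => ∑ b, g 0 b * ((Nmap η)⁻¹ a b - N⁻¹ a b) := by
      funext η
      simp [hwdef, Matrix.mulVec, dotProduct, Matrix.sub_apply, mul_comm]
    rw [hrew]
    exact IsBigO.fun_sum fun b _ => (hEsub a b).const_mul_left _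
  have hwwO : (fun η => w η ⬝ᵥ w η) =O[l] fun η => η * η := by
    have h5 : (fun η => w η ⬝ᵥ w η) = fun η => ∑ a, w η a * w η a := by
      funext η; simp [dotProduct]
    rw [h5]
    exact IsBigO.fun_sum fun a _ => (hwO a).mul (hwO a)
  obtain ⟨Cw0, hCw⟩ := isBigO_iff.1 hwwO
  set Cw : ℝ := max Cw0 0 with hCwdef
  have hCwnn : 0 ≤ Cw := le_max_right _ _
  have hWle : ∀ᶠ η in l, w η ⬝ᵥ w η ≤ Cw * (η * η) := by
    refine hCw.mono fun η hη => ?_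
    have hWnn : 0 ≤ w η ⬝ᵥ w η := dotProduct_self_nonneg' _
    rw [Real.norm_eq_abs, Real.norm_eq_abs, abs_of_nonneg hWnn,
      abs_of_nonneg (mul_self_nonneg η)] at hη
    calc w η ⬝ᵥ w η ≤ Cw0 * (η * η) := hη
      _ ≤ Cw * (η * η) := mul_le_mul_of_nonneg_right (le_max_left _ _) (mul_self_nonneg η)
  have hΔΔ : ∀ᶠ η in l, μ^2 * (Δ η ⬝ᵥ Δ η) ≤ 4 * (Cw * (η * η)) := by
    filter_upwards [stE, hcoE, hWle] with η hstatη hco hW'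
    have hsplit : ∀ a, ((Nmap η)⁻¹ *ᵥ g η) a - (N⁻¹ *ᵥ g 0) a
        = ((Nmap η)⁻¹ *ᵥ Δ η) a + w η a := by
      intro a
      simp only [hwdef, hΔdef, Matrix.mulVec, dotProduct, Matrix.sub_apply]
      rw [← Finset.sum_sub_distrib, ← Finset.sum_add_distrib]
      refine Finset.sum_congr rfl fun b _ => by ring
    set S : ℝ := ∑ a, q a * ((logLoss' (y a * g η a) - logLoss' (y a * g 0 a)) *
      (y a * g η a - y a * g 0 a)) with hSdef
    have hzero : S + lam * (Δ η ⬝ᵥ ((Nmap η)⁻¹ *ᵥ Δ η)) + lam * (Δ η ⬝ᵥ w η) = 0 := by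
      have heq : S + lam * (Δ η ⬝ᵥ ((Nmap η)⁻¹ *ᵥ Δ η)) + lam * (Δ η ⬝ᵥ w η) =
          ∑ a, ((q a * (logLoss' (y a * g η a) * y a) + lam * ((Nmap η)⁻¹ *ᵥ g η) a)
            - (q a * (logLoss' (y a * g 0 a) * y a) + lam * (N⁻¹ *ᵥ g 0) a)) * Δ η a := by
        rw [hSdef]
        simp only [dotProduct]
        rw [Finset.mul_sum, Finset.mul_sum, ← Finset.sum_add_distrib, ← Finset.sum_add_distrib]
        refine Finset.sum_congr rfl fun a _ => ?_
        have h5 := hsplit a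
        simp only [hΔdef] at h5 ⊢
        linear_combination (-lam * (g η a - g 0 a)) * h5
      rw [heq]
      refine Finset.sum_eq_zero fun a _ => ?_
      rw [hstatη a, st0 a]
      ring
    have hSnonneg : 0 ≤ S := by
      rw [hSdef]
      exact Finset.sum_nonneg fun a _ => mul_nonneg (hq0 a).le (logLoss'_mono_mul _ _)
    have hco2 := hco (Δ η)
    have hyoung : 0 ≤ μ * (Δ η ⬝ᵥ w η) + μ^2/4 * (Δ η ⬝ᵥ Δ η) + (w η ⬝ᵥ w η) := by
      simp only [dotProduct]
      rw [Finset.mul_sum, Finset.mul_sum, ← Finset.sum_add_distrib, ← Finset.sum_add_distrib]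
      refine Finset.sum_nonneg fun a _ => ?_
      nlinarith [sq_nonneg (μ * Δ η a / 2 + w η a)]
    have h6 : μ * S + μ * (lam * (Δ η ⬝ᵥ ((Nmap η)⁻¹ *ᵥ Δ η)))
        + μ * (lam * (Δ η ⬝ᵥ w η)) = 0 := by linear_combination μ * hzero
    have h7 := mul_le_mul_of_nonneg_left hco2 (mul_pos hlam hμ).le
    have h8 := mul_le_mul_of_nonneg_left hyoung hlam.le
    have h9 := mul_le_mul_of_nonneg_left hW' hlam.le
    have h10 : 0 ≤ μ * S := mul_nonneg hμ.le hSnonneg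
    nlinarith [mul_pos hlam hμ, dotProduct_self_nonneg' (Δ η)]
  have hΔa : ∀ a, (fun η => g η a - g 0 a) =O[l] fun η => η := by
    intro a
    rw [isBigO_iff]
    refine ⟨Real.sqrt (4 * Cw / μ^2), ?_⟩
    filter_upwards [hΔΔ] with η hη
    have h1 : (g η a - g 0 a)^2 ≤ Δ η ⬝ᵥ Δ η := by
      have : (g η a - g 0 a)^2 = Δ η a * Δ η a := by rw [hΔdef]; ring
      rw [this]
      exact Finset.single_le_sum (f := fun b => Δ η b * Δ η b)
        (fun b _ => mul_self_nonneg _) (Finset.mem_univ a)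
    have hX : (g η a - g 0 a)^2 ≤ 4 * Cw / μ^2 * (η * η) := by
      rw [div_mul_eq_mul_div, le_div_iff₀ (by positivity)]
      nlinarith [mul_pos hμ hμ]
    rw [Real.norm_eq_abs, Real.norm_eq_abs]
    have h2 := Real.sqrt_le_sqrt hX
    rw [Real.sqrt_sq_eq_abs] at h2
    calc |g η a - g 0 a| ≤ Real.sqrt (4 * Cw / μ^2 * (η * η)) := h2
      _ = Real.sqrt (4 * Cw / μ^2) * |η| := by
        rw [show η * η = η^2 by ring, Real.sqrt_mul (by positivity), Real.sqrt_sq_eq_abs]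
  -- refined entrywise expansion of the inverse difference
  set M₃ : Matrix (Fin r) (Fin r) ℝ := N⁻¹ * H * N⁻¹ with hM₃
  have hEref : ∀ a b, (fun η => (Nmap η)⁻¹ a b - N⁻¹ a b + η * M₃ a b) =o[l]
      fun η => η := by
    intro a b
    have hid2 : ∀ᶠ η in l,
        (Nmap η)⁻¹ a b - N⁻¹ a b + η * M₃ a b =
          (-(N⁻¹ * (Nmap η - N - η • H) * (Nmap η)⁻¹)) a b
            + (-(η • (N⁻¹ * H * ((Nmap η)⁻¹ - N⁻¹)))) a b := by
      refine hEid.mono fun η hη => ?_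
      have hmat : (Nmap η)⁻¹ - N⁻¹ + η • M₃ =
          -(N⁻¹ * (Nmap η - N - η • H) * (Nmap η)⁻¹)
            + -(η • (N⁻¹ * H * ((Nmap η)⁻¹ - N⁻¹))) := by
        rw [hM₃]
        nth_rewrite 1 [hη]
        simp only [Matrix.mul_sub, Matrix.sub_mul, Matrix.mul_smul, Matrix.smul_mul,
          smul_sub, neg_sub]
        abel
      have := congrFun (congrFun hmat a) b
      simpa only [Matrix.sub_apply, Matrix.add_apply, Matrix.smul_apply, smul_eq_mul]
        using this
    have hterm1 : (fun η => (-(N⁻¹ * (Nmap η - N - η • H) * (Nmap η)⁻¹)) a b) =o[l]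
        fun η => η := by
      have hrew : (fun η => (-(N⁻¹ * (Nmap η - N - η • H) * (Nmap η)⁻¹)) a b)
          = fun η => -∑ d, (∑ c, N⁻¹ a c * (Nmap η c d - N c d - η * H c d)) *
              (Nmap η)⁻¹ d b := by
        funext η
        simp [Matrix.mul_apply, Matrix.neg_apply, Matrix.sub_apply, Matrix.smul_apply,
          smul_eq_mul]
      rw [hrew]
      refine IsLittleO.neg_left ?_
      refine IsLittleO.fun_sum fun d _ => ?_
      have hin : (fun η => ∑ c, N⁻¹ a c * (Nmap η c d - N c d - η * H c d)) =o[l]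
          fun η => η := IsLittleO.fun_sum fun c _ => (hNo c d).const_mul_left _
      simpa using hin.mul_isBigO (hEO1 d b)
    have hterm2 : (fun η => (-(η • (N⁻¹ * H * ((Nmap η)⁻¹ - N⁻¹)))) a b) =o[l]
        fun η => η := by
      have hrew : (fun η => (-(η • (N⁻¹ * H * ((Nmap η)⁻¹ - N⁻¹)))) a b)
          = fun η => -(η * ∑ d, (N⁻¹ * H) a d * ((Nmap η)⁻¹ d b - N⁻¹ d b)) := by
        funext η
        simp [Matrix.mul_apply, Matrix.neg_apply, Matrix.sub_apply, Matrix.smul_apply,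
          smul_eq_mul, Finset.mul_sum]
      rw [hrew]
      refine IsLittleO.neg_left ?_
      have hin : (fun η => ∑ d, (N⁻¹ * H) a d * ((Nmap η)⁻¹ d b - N⁻¹ d b)) =O[l]
          fun η => η := IsBigO.fun_sum fun d _ => (hEsub d b).const_mul_left _
      exact ((isBigO_refl (fun η : ℝ => η) l).mul hin).trans_isLittleO hηsq
    exact (hterm1.add hterm2).congr'
      (hid2.mono fun η hη => hη.symm) EventuallyEq.rfl
  -- squares of y
  have hysq : ∀ a, y a * y a = 1 := fun a => by rcases hy a with h | h <;> rw [h] <;> norm_num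
  -- Taylor remainder
  set R : ℝ → Fin r → ℝ := fun η a => logLoss' (y a * g η a) - logLoss' (y a * g 0 a)
      - logLoss'' (y a * g 0 a) * (y a * g η a - y a * g 0 a) with hRdef
  have hRo : ∀ a, (fun η => R η a) =o[l] fun η => η := by
    intro a
    have h1 : (fun η => R η a) =O[l] fun η => (g η a - g 0 a) * (g η a - g 0 a) := by
      rw [isBigO_iff]
      refine ⟨1, Filter.Eventually.of_forall fun η => ?_⟩
      rw [Real.norm_eq_abs, Real.norm_eq_abs, hRdef]
      have h2 := logLoss'_taylor (y a * g η a) (y a * g 0 a)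
      have h3 : (y a * g η a - y a * g 0 a)^2 = (g η a - g 0 a)^2 := by
        rcases hy a with h | h <;> rw [h] <;> ring
      calc |logLoss' (y a * g η a) - logLoss' (y a * g 0 a) -
          logLoss'' (y a * g 0 a) * (y a * g η a - y a * g 0 a)|
          ≤ (y a * g η a - y a * g 0 a)^2 := h2
        _ = 1 * |(g η a - g 0 a) * (g η a - g 0 a)| := by
            rw [h3, one_mul, abs_of_nonneg (mul_self_nonneg _), sq]
    exact (h1.trans ((hΔa a).mul (hΔa a))).trans_isLittleO hηsq
  -- key eventual componentwise identity
  set K : Fin r → ℝ := M₃ *ᵥ g 0 with hKdef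
  have hJkey : ∀ᶠ η in l, ∀ a, (J₀ *ᵥ Δ η) a - η * (lam * K a)
      = -(q a * y a * R η a) - lam * ((((Nmap η)⁻¹ - N⁻¹) *ᵥ Δ η) a)
        - lam * ((((Nmap η)⁻¹ - N⁻¹ + η • M₃) *ᵥ g 0) a) := by
    refine stE.mono fun η hstatη a => ?_
    have e1 := hstatη a
    have e2 := st0 a
    have hΔ6 : Δ η a = g η a - g 0 a := rfl
    have hy2 := hysq a
    have hT : R η a = logLoss' (y a * g η a) - logLoss' (y a * g 0 a)
        - logLoss'' (y a * g 0 a) * (y a * g η a - y a * g 0 a) := by rw [hRdef]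
    have hEg : ((Nmap η)⁻¹ *ᵥ g η) a = (N⁻¹ *ᵥ g 0) a + (N⁻¹ *ᵥ Δ η) a
        + ((((Nmap η)⁻¹ - N⁻¹) *ᵥ Δ η) a) + ((((Nmap η)⁻¹ - N⁻¹) *ᵥ g 0) a) := by
      simp only [Matrix.mulVec, dotProduct, Matrix.sub_apply, hΔdef]
      rw [← Finset.sum_add_distrib, ← Finset.sum_add_distrib, ← Finset.sum_add_distrib]
      exact Finset.sum_congr rfl fun b _ => by ring
    have hJv : (J₀ *ᵥ Δ η) a = q a * logLoss'' (y a * g 0 a) * Δ η a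
        + lam * (N⁻¹ *ᵥ Δ η) a := by
      rw [hJ₀]
      simp [Matrix.add_mulVec, Matrix.smul_mulVec, Matrix.mulVec_diagonal, mul_assoc]
    have hthird : (((Nmap η)⁻¹ - N⁻¹ + η • M₃) *ᵥ g 0) a
        = ((((Nmap η)⁻¹ - N⁻¹) *ᵥ g 0) a) + η * K a := by
      rw [hKdef]
      simp only [Matrix.mulVec, dotProduct, Matrix.add_apply, Matrix.sub_apply,
        Matrix.smul_apply, smul_eq_mul]
      rw [Finset.mul_sum, ← Finset.sum_add_distrib]
      exact Finset.sum_congr rfl fun b _ => by ring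
    linear_combination hJv - lam * hEg + lam * hthird + (e1 - e2)
      + (q a * y a) * hT
      - (q a * logLoss'' (y a * g 0 a) * (g η a - g 0 a)) * hy2
      + (q a * logLoss'' (y a * g 0 a)) * hΔ6
  -- each component of J₀ Δ - η lam K is o(η)
  have hTermO : ∀ a, (fun η => (J₀ *ᵥ Δ η) a - η * (lam * K a)) =o[l] fun η => η := by
    intro a
    have hp1 : (fun η => -(q a * y a * R η a)) =o[l] fun η => η := by
      refine IsLittleO.neg_left ?_
      have := (hRo a).const_mul_left (q a * y a)
      simpa [mul_assoc] using this
    have hp2 : (fun η => lam * ((((Nmap η)⁻¹ - N⁻¹) *ᵥ Δ η) a)) =o[l] fun η => η := by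
      have hrew : (fun η => (((Nmap η)⁻¹ - N⁻¹) *ᵥ Δ η) a)
          = fun η => ∑ b, ((Nmap η)⁻¹ a b - N⁻¹ a b) * (g η b - g 0 b) := by
        funext η
        simp [hΔdef, Matrix.mulVec, dotProduct, Matrix.sub_apply]
      have hO : (fun η => (((Nmap η)⁻¹ - N⁻¹) *ᵥ Δ η) a) =O[l] fun η => η * η := by
        rw [hrew]
        exact IsBigO.fun_sum fun b _ => (hEsub a b).mul (hΔa b)
      exact (hO.trans_isLittleO hηsq).const_mul_left lam
    have hp3 : (fun η => lam * ((((Nmap η)⁻¹ - N⁻¹ + η • M₃) *ᵥ g 0) a)) =o[l]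
        fun η => η := by
      have hrew : (fun η => (((Nmap η)⁻¹ - N⁻¹ + η • M₃) *ᵥ g 0) a)
          = fun η => ∑ b, g 0 b * ((Nmap η)⁻¹ a b - N⁻¹ a b + η * M₃ a b) := by
        funext η
        simp [Matrix.mulVec, dotProduct, Matrix.add_apply, Matrix.sub_apply,
          Matrix.smul_apply, smul_eq_mul, mul_comm]
      have ho : (fun η => (((Nmap η)⁻¹ - N⁻¹ + η • M₃) *ᵥ g 0) a) =o[l] fun η => η := by
        rw [hrew]
        exact IsLittleO.fun_sum fun b _ => (hEref a b).const_mul_left _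
      exact ho.const_mul_left lam
    have hsum : (fun η => -(q a * y a * R η a) - lam * ((((Nmap η)⁻¹ - N⁻¹) *ᵥ Δ η) a)
        - lam * ((((Nmap η)⁻¹ - N⁻¹ + η • M₃) *ᵥ g 0) a)) =o[l] fun η => η :=
      (hp1.sub hp2).sub hp3
    exact hsum.congr' (hJkey.mono fun η hη => (hη a).symm) EventuallyEq.rfl
  -- invertibility of J₀
  have hJpd : J₀.PosDef := by
    rw [hJ₀]
    refine Matrix.PosDef.posSemidef_add ?_ ?_
    · exact Matrix.PosSemidef.diagonal fun a =>
        mul_nonneg (hq0 a).le (logLoss''_pos _).le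
    · refine Matrix.PosDef.of_dotProduct_mulVec_pos ?_ fun x hx => ?_
      · show (lam • N⁻¹)ᴴ = lam • N⁻¹
        rw [Matrix.conjTranspose_smul, star_trivial, hN.inv.1.eq]
      · simp only [Matrix.smul_mulVec, dotProduct_smul, smul_eq_mul]
        exact mul_pos hlam (by simpa using hN.inv.dotProduct_mulVec_pos hx)
  have hJdet : IsUnit J₀.det := hJpd.det_pos.ne'.isUnit
  have hJinv : J₀⁻¹ * J₀ = 1 := Matrix.nonsing_inv_mul _ hJdet
  -- final representation
  set v : Fin r → ℝ := lam • (J₀⁻¹ *ᵥ (N⁻¹ *ᵥ (H *ᵥ (N⁻¹ *ᵥ g 0)))) with hv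
  have hKv : N⁻¹ *ᵥ (H *ᵥ (N⁻¹ *ᵥ g 0)) = K := by
    rw [hKdef, hM₃, Matrix.mulVec_mulVec, Matrix.mulVec_mulVec]
  have hrep : ∀ η, ∀ a, g η a - g 0 a - η * v a
      = ∑ b, J₀⁻¹ a b * ((J₀ *ᵥ Δ η) b - η * (lam * K b)) := by
    intro η a
    have h1 : ∑ b, J₀⁻¹ a b * ((J₀ *ᵥ Δ η) b - η * (lam * K b))
        = (J₀⁻¹ *ᵥ (J₀ *ᵥ Δ η)) a - η * lam * (J₀⁻¹ *ᵥ K) a := by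
      simp only [Matrix.mulVec, dotProduct]
      rw [Finset.mul_sum, ← Finset.sum_sub_distrib]
      exact Finset.sum_congr rfl fun b _ => by ring
    have h2 : J₀⁻¹ *ᵥ (J₀ *ᵥ Δ η) = Δ η := by
      rw [Matrix.mulVec_mulVec, hJinv, Matrix.one_mulVec]
    have hva : v a = lam * (J₀⁻¹ *ᵥ K) a := by
      rw [hv, hKv]
      simp
    have hΔ6 : Δ η a = g η a - g 0 a := rfl
    rw [h1, h2, hva, hΔ6]
    ring
  have hfinal : ∀ a, (fun η => g η a - g 0 a - η * v a) =o[l] fun η => η := by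
    intro a
    have hrw : (fun η => g η a - g 0 a - η * v a)
        = fun η => ∑ b, J₀⁻¹ a b * ((J₀ *ᵥ Δ η) b - η * (lam * K b)) := by
      funext η; exact hrep η a
    rw [hrw]
    exact IsLittleO.fun_sum fun b _ => (hTermO b).const_mul_left _
  refine hasDerivWithinAt_pi.2 fun a => ?_
  rw [hasDerivWithinAt_iff_isLittleO]
  rw [show (Ici (0:ℝ)) = insert 0 (Ioi 0) from (Set.Ioi_insert (a := (0:ℝ))).symm]
  rw [nhdsWithin_insert]
  refine IsLittleO.sup ?_ ?_
  · rw [isLittleO_pure]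
    simp
  · have hfun : (fun t : ℝ => g t a - g 0 a - (t - 0) • v a)
        = fun t => g t a - g 0 a - t * v a := by
      funext t; simp
    have hgfun : (fun t : ℝ => t - 0) = fun t : ℝ => t := by
      funext t; simp
    rw [hfun, hgfun]
    exact hfinal a
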